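/- arXiv:1604.03317 — 3 statements merged into one kernel-verified Lean document; each statement's English description precedes it below -/
import Mathlib

section
/- (Weak duality for the dual representation of Bermudan prices.) Let (𝒢_k)_{0≤k≤n} be a filtration on (Ω, ℱ, ℙ), let (Z_k)_{0≤k≤n} be adapted real random variables with max_{0≤k≤n}|Z_k| integrable, let (M_k)_{0≤k≤n} be an integrable (𝒢_k)-martingale with M_0 = 0, and let τ be a (𝒢_k)-stopping time with values in {0, …, n}. Then E[Z_τ] ≤ E[max_{0≤k≤n}(Z_k − M_k)]; consequently sup_τ E[Z_τ] ≤ inf_M E[max_{0≤k≤n}(Z_k − M_k)], the supremum being over all stopping times with values in {0,…,n} and the infimum over all integrable martingales vanishing at 0. -/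
open MeasureTheory ProbabilityTheory

lemma integrable_finset_sup' {Ω : Type*} {m0 : MeasurableSpace Ω} {P : Measure Ω}
    {ι : Type*} (s : Finset ι) (hs : s.Nonempty) (f : ι → Ω → ℝ)
    (hf : ∀ i ∈ s, Integrable (f i) P) :
    Integrable (fun ω => s.sup' hs (fun i => f i ω)) P := by
  induction hs using Finset.Nonempty.cons_induction with
  | singleton a => simpa using hf a (by simp)
  | cons a s ha hs ih =>
      rw [show (fun ω => (Finset.cons a s ha).sup' (Finset.cons_nonempty ha) fun i => f i ω) = fun ω => f a ω ⊔ s.sup' hs fun i => f i ω from funext fun ω => Finset.sup'_cons hs _]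
      exact (hf a (by simp)).sup (ih (fun i hi => hf i (Finset.mem_cons_of_mem hi)))

lemma key {Ω : Type*} {m0 : MeasurableSpace Ω} (P : Measure Ω) [IsProbabilityMeasure P]
    (n : ℕ) (𝒢 : Filtration ℕ m0)
    (Z : ℕ → Ω → ℝ) (hZadapted : Adapted 𝒢 Z)
    (hZint : Integrable (fun ω => (Finset.range (n + 1)).sup'
      Finset.nonempty_range_add_one (fun k => |Z k ω|)) P)
    (M : ℕ → Ω → ℝ) (hM : Martingale M 𝒢 P) (hMint : ∀ k, Integrable (M k) P)
    (hM0 : M 0 = 0) (τ : Ω → ℕ) (hτ : IsStoppingTime 𝒢 (fun ω => (τ ω : WithTop ℕ))) (hτn : ∀ ω, τ ω ≤ n) :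
    ∫ ω, Z (τ ω) ω ∂P ≤ ∫ ω, (Finset.range (n + 1)).sup' Finset.nonempty_range_add_one
        (fun k => Z k ω - M k ω) ∂P := by
  have hZk : ∀ k, k ≤ n → Integrable (Z k) P := by
    intro k hk
    refine hZint.mono ((hZadapted k).mono (𝒢.le k) le_rfl).aestronglyMeasurable ?_
    filter_upwards with ω
    have h1 : |Z k ω| ≤ (Finset.range (n + 1)).sup' Finset.nonempty_range_add_one
        (fun j => |Z j ω|) :=
      Finset.le_sup' (fun j => |Z j ω|) (Finset.mem_range.2 (Nat.lt_succ_of_le hk))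
    have h0 : (0:ℝ) ≤ (Finset.range (n + 1)).sup' Finset.nonempty_range_add_one
        (fun j => |Z j ω|) := (abs_nonneg _).trans h1
    simpa [Real.norm_eq_abs, abs_of_nonneg h0] using h1
  have hZτ : Integrable (stoppedValue Z (fun ω => (τ ω : WithTop ℕ))) P := by
    have : stoppedValue Z (fun ω => (τ ω : WithTop ℕ)) = stoppedValue (fun k => Z (min k n)) (fun ω => (τ ω : WithTop ℕ)) := by
      funext ω; show Z (τ ω) ω = Z (min (τ ω) n) ω; simp [min_eq_left (hτn ω)]
    rw [this]
    exact integrable_stoppedValue ℕ hτ (fun k => hZk _ (min_le_right _ _)) (fun ω => WithTop.coe_le_coe.2 (hτn ω))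
  have hMτ : Integrable (stoppedValue M (fun ω => (τ ω : WithTop ℕ))) P :=
    integrable_stoppedValue ℕ hτ hMint (fun ω => WithTop.coe_le_coe.2 (hτn ω))
  have hsupint : Integrable (fun ω => (Finset.range (n + 1)).sup'
      Finset.nonempty_range_add_one (fun k => Z k ω - M k ω)) P :=
    integrable_finset_sup' _ _ _ (fun k hk =>
      (hZk k (Nat.lt_succ_iff.1 (Finset.mem_range.1 hk))).sub (hMint k))
  -- E[M_τ] = E[M_0] = 0
  have hEM : ∫ ω, stoppedValue M (fun ω => (τ ω : WithTop ℕ)) ω ∂P = 0 := by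
    have h1 := hM.submartingale.expected_stoppedValue_mono
      (isStoppingTime_const 𝒢 0) hτ (fun ω => WithTop.coe_le_coe.2 (Nat.zero_le _)) (fun ω => WithTop.coe_le_coe.2 (hτn ω))
    have h2 := hM.neg.submartingale.expected_stoppedValue_mono
      (isStoppingTime_const 𝒢 0) hτ (fun ω => WithTop.coe_le_coe.2 (Nat.zero_le _)) (fun ω => WithTop.coe_le_coe.2 (hτn ω))
    have hneg : stoppedValue (-M) (fun ω => (τ ω : WithTop ℕ)) = fun ω => -stoppedValue M (fun ω => (τ ω : WithTop ℕ)) ω := by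
      funext ω; simp [stoppedValue]
    simp only [hneg, stoppedValue_const, hM0, Pi.neg_apply, Pi.zero_apply, neg_zero,
      integral_zero, integral_neg] at h1 h2
    linarith
  have hpt : ∀ ω, stoppedValue Z (fun ω => (τ ω : WithTop ℕ)) ω - stoppedValue M (fun ω => (τ ω : WithTop ℕ)) ω ≤
      (Finset.range (n + 1)).sup' Finset.nonempty_range_add_one (fun k => Z k ω - M k ω) :=
    fun ω => Finset.le_sup' (fun k => Z k ω - M k ω)
      (Finset.mem_range.2 (Nat.lt_succ_of_le (hτn ω)))
  calc ∫ ω, Z (τ ω) ω ∂P = ∫ ω, stoppedValue Z (fun ω => (τ ω : WithTop ℕ)) ω - stoppedValue M (fun ω => (τ ω : WithTop ℕ)) ω ∂P := by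
        rw [integral_sub hZτ hMτ, hEM]; simp [stoppedValue]; rfl
    _ ≤ _ := integral_mono (hZτ.sub hMτ) hsupint hpt


open MeasureTheory ProbabilityTheory in
/-- weak duality for the dual representation of Bermudan prices:
`E[Z_τ] ≤ E[max_{0≤k≤n}(Z_k − M_k)]` for every `{0,…,n}`-valued stopping time `τ` and
every integrable martingale `M` vanishing at `0`; consequently
`sup_τ E[Z_τ] ≤ inf_M E[max_{0≤k≤n}(Z_k − M_k)]`. -/
theorem weak_duality_bermudan
    {Ω : Type*} {m0 : MeasurableSpace Ω} (P : Measure Ω) [IsProbabilityMeasure P]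
    (n : ℕ) (hn : 1 ≤ n)
    (𝒢 : Filtration ℕ m0)
    (Z : ℕ → Ω → ℝ)
    (hZadapted : Adapted 𝒢 Z)
    (hZint : Integrable (fun ω => (Finset.range (n + 1)).sup'
      Finset.nonempty_range_add_one (fun k => |Z k ω|)) P)
    (M : ℕ → Ω → ℝ)
    (hM : Martingale M 𝒢 P)
    (hMint : ∀ k, Integrable (M k) P)
    (hM0 : M 0 = 0)
    (τ : Ω → ℕ)
    (hτ : IsStoppingTime 𝒢 (fun ω => (τ ω : WithTop ℕ)))
    (hτn : ∀ ω, τ ω ≤ n) :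
    (∫ ω, Z (τ ω) ω ∂P ≤ ∫ ω, (Finset.range (n + 1)).sup' Finset.nonempty_range_add_one
        (fun k => Z k ω - M k ω) ∂P) ∧
    sSup {x : ℝ | ∃ σ : Ω → ℕ, IsStoppingTime 𝒢 (fun ω => (σ ω : WithTop ℕ)) ∧ (∀ ω, σ ω ≤ n) ∧
        x = ∫ ω, Z (σ ω) ω ∂P} ≤
      sInf {y : ℝ | ∃ N : ℕ → Ω → ℝ, Martingale N 𝒢 P ∧ (∀ k, Integrable (N k) P) ∧
        N 0 = 0 ∧
        y = ∫ ω, (Finset.range (n + 1)).sup' Finset.nonempty_range_add_one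
          (fun k => Z k ω - N k ω) ∂P} := by
  refine ⟨key P n 𝒢 Z hZadapted hZint M hM hMint hM0 τ hτ hτn, ?_⟩
  have hA : {x : ℝ | ∃ σ : Ω → ℕ, IsStoppingTime 𝒢 (fun ω => (σ ω : WithTop ℕ)) ∧ (∀ ω, σ ω ≤ n) ∧
      x = ∫ ω, Z (σ ω) ω ∂P}.Nonempty :=
    ⟨_, fun _ => 0, isStoppingTime_const 𝒢 0, fun ω => Nat.zero_le n, rfl⟩
  have hB : {y : ℝ | ∃ N : ℕ → Ω → ℝ, Martingale N 𝒢 P ∧ (∀ k, Integrable (N k) P) ∧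
      N 0 = 0 ∧ y = ∫ ω, (Finset.range (n + 1)).sup' Finset.nonempty_range_add_one
        (fun k => Z k ω - N k ω) ∂P}.Nonempty :=
    ⟨_, 0, martingale_zero _ _ _, fun k => integrable_zero _ _ _, rfl, rfl⟩
  refine csSup_le hA fun x hx => le_csInf hB fun y hy => ?_
  obtain ⟨σ, hσ, hσn, rfl⟩ := hx
  obtain ⟨N, hN, hNint, hN0, rfl⟩ := hy
  exact key P n 𝒢 Z hZadapted hZint N hN hNint hN0 σ hσ hσn
end

section
/- (Localization of minimizers under uniform approximation.) Let F : ℝ^N → ℝ be convex, let x♯ be a minimizer of F, let Λ > 0, and suppose γ := inf{ F(x) − F(x♯) : |x − x♯| ≥ Λ } > 0. Let G : ℝ^N → ℝ be convex with sup{ |G(x) − F(x)| : |x − x♯| ≤ Λ } ≤ γ/3. Then for every x with |x − x♯| ≥ Λ one has G(x) − G(x♯) ≥ γ/3 > 0; in particular every minimizer y of G satisfies |y − x♯| < Λ. -/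
/-- localization of minimizers under uniform approximation: if `F` is
convex with minimizer `x♯`, `γ := inf{F(x) − F(x♯) : |x − x♯| ≥ Λ} > 0`, and `G` is
convex with `|G − F| ≤ γ/3` on the ball `{|x − x♯| ≤ Λ}`, then `G(x) − G(x♯) ≥ γ/3 > 0`
whenever `|x − x♯| ≥ Λ`; in particular every minimizer of `G` lies in the open ball
`{|y − x♯| < Λ}`. -/
theorem minimizer_localization
    (N : ℕ) (hN : 1 ≤ N)
    (F G : EuclideanSpace ℝ (Fin N) → ℝ)
    (hF : ConvexOn ℝ Set.univ F)
    (hG : ConvexOn ℝ Set.univ G)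
    (xSharp : EuclideanSpace ℝ (Fin N))
    (hmin : ∀ x, F xSharp ≤ F x)
    (Λ : ℝ) (hΛ : 0 < Λ)
    (γ : ℝ)
    (hγ : γ = sInf {y : ℝ | ∃ x : EuclideanSpace ℝ (Fin N),
      Λ ≤ ‖x - xSharp‖ ∧ y = F x - F xSharp})
    (hγpos : 0 < γ)
    (happrox : ∀ x : EuclideanSpace ℝ (Fin N), ‖x - xSharp‖ ≤ Λ → |G x - F x| ≤ γ / 3) :
    (∀ x : EuclideanSpace ℝ (Fin N), Λ ≤ ‖x - xSharp‖ → γ / 3 ≤ G x - G xSharp) ∧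
    (∀ y : EuclideanSpace ℝ (Fin N), (∀ x, G y ≤ G x) → ‖y - xSharp‖ < Λ) := by
  have key : ∀ x, Λ ≤ ‖x - xSharp‖ → γ / 3 ≤ G x - G xSharp := by
    intro x hx
    have hxpos : 0 < ‖x - xSharp‖ := lt_of_lt_of_le hΛ hx
    set t : ℝ := Λ / ‖x - xSharp‖ with ht
    have ht0 : 0 < t := div_pos hΛ hxpos
    have ht1 : t ≤ 1 := (div_le_one hxpos).mpr hx
    set z := xSharp + t • (x - xSharp) with hz
    have hzn : ‖z - xSharp‖ = Λ := by
      have : z - xSharp = t • (x - xSharp) := by rw [hz]; abel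
      rw [this, norm_smul, Real.norm_eq_abs, abs_of_pos ht0, ht]
      field_simp
    have hγle : γ ≤ F z - F xSharp := by
      rw [hγ]
      apply csInf_le
      · refine ⟨0, fun y hy => ?_⟩
        obtain ⟨w, _, hw⟩ := hy
        simpa [hw] using sub_nonneg.mpr (hmin w)
      · exact ⟨z, le_of_eq hzn.symm, rfl⟩
    have hGz : |G z - F z| ≤ γ / 3 := happrox z (le_of_eq hzn)
    have hGx : |G xSharp - F xSharp| ≤ γ / 3 := happrox xSharp (by simp [hΛ.le])
    have hconv : G z ≤ (1 - t) * G xSharp + t * G x := by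
      have hzz : z = (1 - t) • xSharp + t • x := by
        rw [hz]; module
      rw [hzz]
      exact hG.2 (Set.mem_univ _) (Set.mem_univ _) (by linarith) ht0.le (by ring)
    obtain ⟨h1a, h1b⟩ := abs_le.mp hGz
    obtain ⟨h2a, h2b⟩ := abs_le.mp hGx
    have hFz : F xSharp ≤ F z := hmin z
    have h4 : γ / 3 ≤ t * (G x - G xSharp) := by nlinarith
    nlinarith [mul_nonneg (sub_nonneg.mpr ht1) (le_of_lt (lt_of_lt_of_le (by linarith : (0:ℝ) < γ/3) (by nlinarith : γ/3 ≤ G x - G xSharp)))]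
  refine ⟨key, fun y hy => ?_⟩
  by_contra h
  push_neg at h
  have h1 := key y h
  have h2 := hy xSharp
  linarith
end

section
/- Let a, b ∈ ℝ with a ≠ 0 and b ≠ 0, let c ∈ ℝ, let p ≥ 1, and let P be a real polynomial of degree at most p − 1. Then the set { x ∈ ℝ : a·exp(b·x + c) = P(x) } is finite and contains at most p elements. -/
/-- Rolle-based zero counting: if any finset of zeros of `deriv f` has at most `n`
elements, then the zero set of `f` is finite with at most `n+1` elements. -/
lemma rolle_zero_count (f : ℝ → ℝ) (hf : Differentiable ℝ f) (n : ℕ)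
    (h : ∀ s : Finset ℝ, (∀ x ∈ s, deriv f x = 0) → s.card ≤ n) :
    {x : ℝ | f x = 0}.Finite ∧ {x : ℝ | f x = 0}.ncard ≤ n + 1 := by
  have claim : ∀ s : Finset ℝ, (∀ x ∈ s, f x = 0) → s.card ≤ n + 1 := by
    intro s hs
    by_contra hlt
    push_neg at hlt
    obtain ⟨t, hts, htc⟩ := Finset.exists_subset_card_eq (show n + 2 ≤ s.card by omega)
    -- t has n+2 elements, all zeros of f
    have ht0 : ∀ x ∈ t, f x = 0 := fun x hx => hs x (hts hx)
    have hmem : ∀ i : Fin (n + 2), t.orderEmbOfFin htc i ∈ t := fun i => t.orderEmbOfFin_mem htc i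
    have rolle : ∀ i : Fin (n + 1),
        ∃ y ∈ Set.Ioo (t.orderEmbOfFin htc i.castSucc) (t.orderEmbOfFin htc i.succ), deriv f y = 0 := by
      intro i
      have hlt' : t.orderEmbOfFin htc i.castSucc < t.orderEmbOfFin htc i.succ := by
        apply (t.orderEmbOfFin htc).strictMono
        exact Fin.castSucc_lt_succ
      exact exists_deriv_eq_zero hlt' (hf.continuous.continuousOn)
        ((ht0 _ (hmem _)).trans (ht0 _ (hmem _)).symm)
    choose cc hcc hcc0 using rolle
    have hmono : StrictMono cc := by
      intro i j hij
      have h1 : cc i < t.orderEmbOfFin htc i.succ := (hcc i).2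
      have h2 : t.orderEmbOfFin htc j.castSucc < cc j := (hcc j).1
      have h3 : t.orderEmbOfFin htc i.succ ≤ t.orderEmbOfFin htc j.castSucc := by
        apply (t.orderEmbOfFin htc).monotone
        exact Fin.succ_le_castSucc_iff.mpr hij
      linarith
    have hcard : (Finset.univ.image cc).card = n + 1 := by
      rw [Finset.card_image_of_injective _ hmono.injective, Finset.card_univ, Fintype.card_fin]
    have := h (Finset.univ.image cc) (by
      intro x hx
      simp only [Finset.mem_image] at hx
      obtain ⟨i, _, rfl⟩ := hx
      exact hcc0 i)
    omega
  have hfin : {x : ℝ | f x = 0}.Finite := by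
    by_contra hinf
    have hinf' : {x : ℝ | f x = 0}.Infinite := hinf
    obtain ⟨t, hts, htc⟩ := hinf'.exists_subset_card_eq (n + 2)
    have := claim t (fun x hx => hts hx)
    omega
  refine ⟨hfin, ?_⟩
  rw [Set.ncard_eq_toFinset_card _ hfin]
  exact claim _ (fun x hx => by simpa using (Set.Finite.mem_toFinset hfin).mp hx)

/-- for `a ≠ 0`, `b ≠ 0`, `p ≥ 1` and a real polynomial `P` of degree at
most `p − 1`, the set `{x ∈ ℝ : a·exp(b·x + c) = P(x)}` is finite with at most `p`
elements. -/
theorem exp_eq_polynomial_finite_roots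
    (a b c : ℝ) (ha : a ≠ 0) (hb : b ≠ 0)
    (p : ℕ) (hp : 1 ≤ p)
    (P : Polynomial ℝ) (hdeg : P.natDegree ≤ p - 1) :
    {x : ℝ | a * Real.exp (b * x + c) = Polynomial.eval x P}.Finite ∧
    {x : ℝ | a * Real.exp (b * x + c) = Polynomial.eval x P}.ncard ≤ p := by
  by_cases hP : P = 0
  · have : {x : ℝ | a * Real.exp (b * x + c) = Polynomial.eval x P} = ∅ := by
      ext x
      simp [hP, ha, Real.exp_ne_zero]
    rw [this]
    simp [hp]
  -- reduce to zeros of g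
  set g : ℝ → ℝ := fun x => Polynomial.eval x P * Real.exp (-(b * x + c)) - a with hg
  have hset : {x : ℝ | a * Real.exp (b * x + c) = Polynomial.eval x P} = {x : ℝ | g x = 0} := by
    ext x
    simp only [Set.mem_setOf_eq, hg, sub_eq_zero]
    rw [Real.exp_neg]
    rw [mul_inv_eq_iff_eq_mul₀ (Real.exp_ne_zero _)]
    constructor <;> intro h <;> linarith
  have hgdiff : Differentiable ℝ g := by
    apply Differentiable.sub_const
    exact (P.differentiable).mul (((differentiable_id.const_mul b).add_const c).neg.exp)
  set Q : Polynomial ℝ := P.derivative - Polynomial.C b * P with hQ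
  have hQne : Q ≠ 0 := by
    intro h0
    have hd : P.derivative = Polynomial.C b * P := by
      exact sub_eq_zero.mp h0
    by_cases hP0 : P.natDegree = 0
    · obtain ⟨k, rfl⟩ := Polynomial.natDegree_eq_zero.mp hP0
      rw [Polynomial.derivative_C, ← Polynomial.C_mul] at hd
      have : (0 : ℝ) = b * k := by
        have := congrArg (Polynomial.eval 0) hd
        simpa using this
      have hk : k ≠ 0 := fun h => hP (by simp [h])
      exact (mul_ne_zero hb hk) this.symm
    · have h1 : P.derivative.natDegree < P.natDegree := Polynomial.natDegree_derivative_lt hP0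
      have h2 : (Polynomial.C b * P).natDegree = P.natDegree := Polynomial.natDegree_C_mul hb
      rw [hd, h2] at h1
      omega
  have hQdeg : Q.natDegree ≤ p - 1 := by
    apply le_trans (Polynomial.natDegree_sub_le _ _)
    apply max_le
    · exact le_trans (Polynomial.natDegree_derivative_le P) (by omega)
    · exact le_trans (Polynomial.natDegree_C_mul_le _ _) hdeg
  have hderiv : ∀ x : ℝ, deriv g x = Polynomial.eval x Q * Real.exp (-(b * x + c)) := by
    intro x
    have h1 : HasDerivAt (fun x : ℝ => Polynomial.eval x P) (Polynomial.eval x P.derivative) x :=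
      P.hasDerivAt x
    have h2 : HasDerivAt (fun x : ℝ => -(b * x + c)) (-b) x := by
      exact (((hasDerivAt_id x).const_mul b).add_const c).neg.congr_deriv (by ring)
    have h3 : HasDerivAt (fun x : ℝ => Real.exp (-(b * x + c)))
        (Real.exp (-(b * x + c)) * (-b)) x := h2.exp
    have h4 : HasDerivAt g
        (Polynomial.eval x P.derivative * Real.exp (-(b * x + c)) +
          Polynomial.eval x P * (Real.exp (-(b * x + c)) * (-b))) x :=
      (h1.mul h3).sub_const a
    rw [h4.deriv, hQ]
    simp [Polynomial.eval_sub, Polynomial.eval_mul]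
    ring
  have hcount : ∀ s : Finset ℝ, (∀ x ∈ s, deriv g x = 0) → s.card ≤ p - 1 := by
    intro s hs
    have hsub : s ⊆ Q.roots.toFinset := by
      intro x hx
      rw [Multiset.mem_toFinset, Polynomial.mem_roots hQne]
      have := hs x hx
      rw [hderiv x] at this
      rcases mul_eq_zero.mp this with h | h
      · exact h
      · exact absurd h (Real.exp_ne_zero _)
    calc s.card ≤ Q.roots.toFinset.card := Finset.card_le_card hsub
      _ ≤ Multiset.card Q.roots := Q.roots.toFinset_card_le
      _ ≤ Q.natDegree := Q.card_roots'
      _ ≤ p - 1 := hQdeg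
  obtain ⟨hfin, hcard⟩ := rolle_zero_count g hgdiff (p - 1) hcount
  rw [hset]
  exact ⟨hfin, by omega⟩
end
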